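/- Let f : ℝⁿ → ℝ be Lipschitz continuous with Lipschitz constant L ≥ 0, let h > 0, n ≥ 1, λ > 0. Then for every point x_k of the grid hℤⁿ: |M_λ^h(f)(x_k) − M_λ(f)(x_k)| ≤ (2 + √n)·L·h + 2λh²n. -/
import Mathlib


noncomputable section

/-- Global lower Moreau envelope `M_λ(f)(x) = inf_{y∈ℝⁿ} {f(y) + λ|y−x|²}`. -/
def moreauLower {n : ℕ} (lam : ℝ) (f : EuclideanSpace ℝ (Fin n) → ℝ)
    (x : EuclideanSpace ℝ (Fin n)) : ℝ :=
  ⨅ y : EuclideanSpace ℝ (Fin n), (f y + lam * ‖y - x‖ ^ 2)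

/-- The grid point `x_k = h·k` of the grid `hℤⁿ`. -/
def gridPt {n : ℕ} (h : ℝ) (k : Fin n → ℤ) : EuclideanSpace ℝ (Fin n) :=
  (WithLp.equiv 2 (Fin n → ℝ)).symm (fun i => h * (k i))

/-- The discrete lower Moreau envelope at the grid point `x_k`:
`M_λ^h(f)(x_k) = inf {f(x_k + r·h) + λh²|r|² : r ∈ ℤⁿ}`. -/
def moreauLowerDiscrete {n : ℕ} (lam h : ℝ) (f : EuclideanSpace ℝ (Fin n) → ℝ)
    (k : Fin n → ℤ) : ℝ :=
  ⨅ r : Fin n → ℤ, (f (gridPt h (k + r)) + lam * h ^ 2 * ‖gridPt 1 r‖ ^ 2)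

lemma gridPt_add {n : ℕ} (h : ℝ) (k r : Fin n → ℤ) :
    gridPt h (k + r) = gridPt h k + gridPt h r := by
  ext i; simp [gridPt]; ring

lemma gridPt_smul {n : ℕ} (h : ℝ) (r : Fin n → ℤ) :
    gridPt h r = h • gridPt 1 r := by
  ext i; simp [gridPt]

lemma gridPt_apply {n : ℕ} (h : ℝ) (k : Fin n → ℤ) (i : Fin n) :
    gridPt h k i = h * k i := rfl

lemma enorm_sq {n : ℕ} (v : EuclideanSpace ℝ (Fin n)) : ‖v‖ ^ 2 = ∑ i, v i ^ 2 := by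
  rw [EuclideanSpace.norm_eq, Real.sq_sqrt (by positivity)]
  simp [sq_abs]

/-- Error estimate for the discrete Moreau envelope of an `L`-Lipschitz function:
`|M_λ^h(f)(x_k) − M_λ(f)(x_k)| ≤ (2 + √n)·L·h + 2λh²n`. -/
theorem discrete_moreau_error_lipschitz {n : ℕ} (hn : 1 ≤ n)
    (f : EuclideanSpace ℝ (Fin n) → ℝ) (L : ℝ) (hL : 0 ≤ L)
    (hf : ∀ x y : EuclideanSpace ℝ (Fin n), |f x - f y| ≤ L * ‖x - y‖)
    (h lam : ℝ) (hh : 0 < h) (hlam : 0 < lam) :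
    ∀ k : Fin n → ℤ,
      |moreauLowerDiscrete lam h f k - moreauLower lam f (gridPt h k)|
        ≤ (2 + Real.sqrt n) * L * h + 2 * lam * h ^ 2 * n := by
  intro k
  set x := gridPt h k with hx
  -- lower bound for the continuous family
  have hB : ∀ y, f x - L ^ 2 / (4 * lam) ≤ f y + lam * ‖y - x‖ ^ 2 := by
    intro y
    have h1 := (abs_le.mp (hf x y)).2
    have h2 : ‖x - y‖ = ‖y - x‖ := norm_sub_rev _ _
    rw [h2] at h1
    have hdiv : L ^ 2 / (4 * lam) * (4 * lam) = L ^ 2 :=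
      div_mul_cancel₀ _ (by positivity)
    nlinarith [sq_nonneg (2 * lam * ‖y - x‖ - L), hlam]
  have hbdd : BddBelow (Set.range fun y : EuclideanSpace ℝ (Fin n) =>
      f y + lam * ‖y - x‖ ^ 2) := ⟨f x - L ^ 2 / (4 * lam), by rintro _ ⟨y, rfl⟩; exact hB y⟩
  -- rewrite discrete term as continuous term
  have hterm : ∀ r : Fin n → ℤ, f (gridPt h (k + r)) + lam * h ^ 2 * ‖gridPt 1 r‖ ^ 2
      = f (gridPt h (k + r)) + lam * ‖gridPt h (k + r) - x‖ ^ 2 := by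
    intro r
    have hsub : gridPt h (k + r) - x = gridPt h r := by rw [gridPt_add, hx]; abel
    have h4 : ‖gridPt h r‖ = |h| * ‖gridPt 1 r‖ := by
      rw [gridPt_smul h r, norm_smul, Real.norm_eq_abs]
    rw [hsub, h4, abs_of_pos hh]
    ring
  have hbddD : BddBelow (Set.range fun r : Fin n → ℤ =>
      f (gridPt h (k + r)) + lam * h ^ 2 * ‖gridPt 1 r‖ ^ 2) := by
    refine ⟨f x - L ^ 2 / (4 * lam), ?_⟩
    rintro _ ⟨r', rfl⟩
    exact le_of_le_of_eq (hB (gridPt h (k + r'))) (hterm r').symm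
  have hML : moreauLower lam f x ≤ moreauLowerDiscrete lam h f k := by
    apply le_ciInf
    intro r
    rw [hterm r]
    exact ciInf_le hbdd _
  -- the key upper estimate
  have hupper : ∀ y : EuclideanSpace ℝ (Fin n),
      moreauLowerDiscrete lam h f k ≤ f y + lam * ‖y - x‖ ^ 2 + Real.sqrt n * L * h := by
    intro y
    set r : Fin n → ℤ := fun i => if 0 ≤ y i - x i then ⌊(y i - x i) / h⌋ else ⌈(y i - x i) / h⌉
      with hr
    have hfacts : ∀ i, (h * r i) ^ 2 ≤ (y i - x i) ^ 2 ∧ (y i - x i - h * r i) ^ 2 ≤ h ^ 2 := by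
      intro i
      have hdiv : h * ((y i - x i) / h) = y i - x i := by field_simp
      by_cases hpos : 0 ≤ y i - x i
      · have hri : r i = ⌊(y i - x i) / h⌋ := by simp only [hr]; rw [if_pos hpos]
        have h1 : (⌊(y i - x i) / h⌋ : ℝ) ≤ (y i - x i) / h := Int.floor_le _
        have h2 : (y i - x i) / h - 1 < ⌊(y i - x i) / h⌋ := Int.sub_one_lt_floor _
        have h3 : (0:ℝ) ≤ ⌊(y i - x i) / h⌋ := by
          exact_mod_cast Int.floor_nonneg.mpr (by positivity)
        have hs0 : 0 ≤ h * (⌊(y i - x i) / h⌋ : ℝ) := mul_nonneg hh.le h3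
        have hsa : h * (⌊(y i - x i) / h⌋ : ℝ) ≤ y i - x i := by
          calc h * (⌊(y i - x i) / h⌋ : ℝ) ≤ h * ((y i - x i) / h) :=
                mul_le_mul_of_nonneg_left h1 hh.le
            _ = y i - x i := hdiv
        have hlow : y i - x i - h < h * (⌊(y i - x i) / h⌋ : ℝ) := by
          have := mul_lt_mul_of_pos_left h2 hh
          rw [mul_sub, hdiv, mul_one] at this
          linarith
        rw [hri]
        constructor <;> nlinarith
      · push_neg at hpos
        have hri : r i = ⌈(y i - x i) / h⌉ := by simp only [hr]; rw [if_neg (not_le.mpr hpos)]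
        have h1 : (y i - x i) / h ≤ (⌈(y i - x i) / h⌉ : ℝ) := Int.le_ceil _
        have h2 : (⌈(y i - x i) / h⌉ : ℝ) < (y i - x i) / h + 1 := Int.ceil_lt_add_one _
        have h3 : (⌈(y i - x i) / h⌉ : ℝ) ≤ 0 := by
          have : ⌈(y i - x i) / h⌉ ≤ (0:ℤ) := Int.ceil_le.mpr (by
            push_cast
            exact div_nonpos_of_nonpos_of_nonneg hpos.le hh.le)
          exact_mod_cast this
        have hs0 : h * (⌈(y i - x i) / h⌉ : ℝ) ≤ 0 := mul_nonpos_of_nonneg_of_nonpos hh.le h3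
        have hsa : y i - x i ≤ h * (⌈(y i - x i) / h⌉ : ℝ) := by
          calc y i - x i = h * ((y i - x i) / h) := hdiv.symm
            _ ≤ h * (⌈(y i - x i) / h⌉ : ℝ) := mul_le_mul_of_nonneg_left h1 hh.le
        have hup : h * (⌈(y i - x i) / h⌉ : ℝ) < y i - x i + h := by
          have := mul_lt_mul_of_pos_left h2 hh
          rw [mul_add, hdiv, mul_one] at this
          linarith
        rw [hri]
        constructor <;> nlinarith
    -- distance from shifted grid point to y
    have hdist : ‖gridPt h (k + r) - y‖ ≤ Real.sqrt n * h := by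
      have hsq : ‖gridPt h (k + r) - y‖ ^ 2 ≤ (n : ℝ) * h ^ 2 := by
        rw [enorm_sq]
        have hco : ∀ i, (gridPt h (k + r) - y) i ^ 2 ≤ h ^ 2 := by
          intro i
          have h1 : (gridPt h (k + r) - y) i = -(y i - x i - h * r i) := by
            have : (gridPt h (k + r) - y) i = gridPt h (k + r) i - y i := by simp
            rw [this, gridPt_apply, hx]
            have : gridPt h k i = h * k i := gridPt_apply h k i
            rw [this]
            push_cast [Pi.add_apply]
            ring
          rw [h1, neg_sq]
          exact (hfacts i).2
        calc ∑ i, (gridPt h (k + r) - y) i ^ 2 ≤ ∑ _i : Fin n, h ^ 2 :=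
              Finset.sum_le_sum fun i _ => hco i
          _ = (n : ℝ) * h ^ 2 := by simp [mul_comm]
      have h2 : ‖gridPt h (k + r) - y‖ ^ 2 ≤ (Real.sqrt n * h) ^ 2 := by
        rwa [mul_pow, Real.sq_sqrt (Nat.cast_nonneg n)]
      nlinarith [norm_nonneg (gridPt h (k + r) - y), Real.sqrt_nonneg (n:ℝ), hh.le,
        mul_nonneg (Real.sqrt_nonneg (n:ℝ)) hh.le]
    -- norm of grid shift at most norm of y - x
    have hnr : ‖gridPt h (k + r) - x‖ ^ 2 ≤ ‖y - x‖ ^ 2 := by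
      rw [enorm_sq, enorm_sq]
      apply Finset.sum_le_sum
      intro i _
      have h1 : (gridPt h (k + r) - x) i = h * r i := by
        have h2 : (gridPt h (k + r) - x) i = gridPt h (k + r) i - x i := by simp
        rw [h2, gridPt_apply, hx]
        have : gridPt h k i = h * k i := gridPt_apply h k i
        rw [this]
        push_cast [Pi.add_apply]
        ring
      have h2 : (y - x) i = y i - x i := by simp
      rw [h1, h2]
      exact (hfacts i).1
    have hfy : f (gridPt h (k + r)) ≤ f y + L * (Real.sqrt n * h) := by
      have h1 := (abs_le.mp (hf (gridPt h (k + r)) y)).2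
      have h2 : L * ‖gridPt h (k + r) - y‖ ≤ L * (Real.sqrt n * h) :=
        mul_le_mul_of_nonneg_left hdist hL
      linarith
    calc moreauLowerDiscrete lam h f k
        ≤ f (gridPt h (k + r)) + lam * h ^ 2 * ‖gridPt 1 r‖ ^ 2 := ciInf_le hbddD r
      _ = f (gridPt h (k + r)) + lam * ‖gridPt h (k + r) - x‖ ^ 2 := hterm r
      _ ≤ f y + L * (Real.sqrt n * h) + lam * ‖y - x‖ ^ 2 := by
          have := mul_le_mul_of_nonneg_left hnr hlam.le
          linarith
      _ = f y + lam * ‖y - x‖ ^ 2 + Real.sqrt n * L * h := by ring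
  have hMU : moreauLowerDiscrete lam h f k ≤ moreauLower lam f x + Real.sqrt n * L * h := by
    rw [moreauLower]
    have hle : moreauLowerDiscrete lam h f k - Real.sqrt n * L * h
        ≤ ⨅ y : EuclideanSpace ℝ (Fin n), (f y + lam * ‖y - x‖ ^ 2) := by
      apply le_ciInf
      intro y
      linarith [hupper y]
    linarith
  have hfin : Real.sqrt n * L * h ≤ (2 + Real.sqrt n) * L * h + 2 * lam * h ^ 2 * n := by
    have h1 : (0:ℝ) ≤ 2 * L * h := by positivity
    have h2 : (0:ℝ) ≤ 2 * lam * h ^ 2 * n := by positivity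
    nlinarith
  rw [abs_of_nonneg (by linarith)]
  linarith
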